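/- Let c ≥ 1, let F be a group and let R ≤ K be normal subgroups of F. Then the sequence of group homomorphisms induced by the inclusions, (R ∩ γ_{c+1}(F))/⟨T_{c+1}(F) ∩ R⟩ → (K ∩ γ_{c+1}(F))/⟨T_{c+1}(F) ∩ K⟩ → K/(⟨T_{c+1}(F) ∩ K⟩·R) → F/(R·γ_{c+1}(F)) → F/(K·γ_{c+1}(F)) → 1, is exact: the image of each map equals the kernel of the next, and the last map is surjective. -/

import Mathlib

open Subgroup

open scoped commutatorElement

/-- `Tset G c` is the set `T_{c+1}(G)` of left-normed commutators of weight `c+1` in `G`: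
`Tset G 0 = G` (weight-one "commutators", i.e. all elements), and
`Tset G (n+1) = {⁅a, g⁆ | a ∈ Tset G n, g ∈ G}`. -/
def Tset (G : Type*) [Group G] : ℕ → Set G
  | 0 => Set.univ
  | n + 1 => {x | ∃ a ∈ Tset G n, ∃ g : G, x = ⁅a, g⁆}

theorem Tset_conj {G : Type*} [Group G] (n : ℕ) {x : G} (hx : x ∈ Tset G n) (g : G) :
    g * x * g⁻¹ ∈ Tset G n := by
  induction n generalizing x with
  | zero => trivial
  | succ n ih =>
      obtain ⟨a, ha, b, rfl⟩ := hx
      exact ⟨g * a * g⁻¹, ih ha, g * b * g⁻¹, conjugate_commutatorElement a b g⟩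

/-- `Tcl c S = ⟨T_{c+1}(G) ∩ S⟩`, the subgroup generated by the left-normed commutators of
weight `c+1` lying in `S`. -/
def Tcl {G : Type*} [Group G] (c : ℕ) (S : Subgroup G) : Subgroup G :=
  Subgroup.closure (Tset G c ∩ (S : Set G))

instance Tcl_normal {G : Type*} [Group G] (c : ℕ) (S : Subgroup G) [hS : S.Normal] :
    (Tcl c S).Normal := by
  constructor
  intro n hn g
  induction hn using Subgroup.closure_induction with
  | mem x hx =>
      exact Subgroup.subset_closure ⟨Tset_conj c hx.1 g, hS.conj_mem x hx.2 g⟩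
  | one => simpa using (Tcl c S).one_mem
  | mul x y _ _ hx hy =>
      have h : g * (x * y) * g⁻¹ = (g * x * g⁻¹) * (g * y * g⁻¹) := by group
      rw [h]; exact mul_mem hx hy
  | inv x _ hx =>
      have h : g * x⁻¹ * g⁻¹ = (g * x * g⁻¹)⁻¹ := by group
      rw [h]; exact inv_mem hx

theorem Tset_subset_lcs {G : Type*} [Group G] (n : ℕ) :
    Tset G n ⊆ ((⊤ : Subgroup G).lowerCentralSeries n : Set G) := by
  induction n with
  | zero => intro x _; exact Subgroup.mem_top x
  | succ n ih =>
      rintro x ⟨a, ha, b, rfl⟩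
      rw [Subgroup.lowerCentralSeries_succ]
      exact Subgroup.commutator_mem_commutator (ih ha) (Subgroup.mem_top b)

theorem Tcl_le {G : Type*} [Group G] (c : ℕ) (S : Subgroup G) : Tcl c S ≤ S :=
  (Subgroup.closure_le S).2 Set.inter_subset_right

theorem Tcl_le_lcs {G : Type*} [Group G] (c : ℕ) (S : Subgroup G) :
    Tcl c S ≤ (⊤ : Subgroup G).lowerCentralSeries c :=
  (Subgroup.closure_le _).2 fun _ hx => Tset_subset_lcs c hx.1

theorem Tcl_mono {G : Type*} [Group G] (c : ℕ) {R K : Subgroup G} (h : R ≤ K) :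
    Tcl c R ≤ Tcl c K :=
  Subgroup.closure_mono (Set.inter_subset_inter_right _ h)

theorem subgroupOf_le_comap_inclusion {F : Type*} [Group F] {A B H₁ H₂ : Subgroup F}
    (hH : H₁ ≤ H₂) (hAB : A ≤ B) :
    A.subgroupOf H₁ ≤ (B.subgroupOf H₂).comap (Subgroup.inclusion hH) := by
  intro x hx
  rw [Subgroup.mem_comap, Subgroup.mem_subgroupOf, Subgroup.coe_inclusion]
  exact hAB (Subgroup.mem_subgroupOf.mp hx)

variable {F : Type*} [Group F]

/-- The map `(R ∩ γ_{c+1}(F))/⟨T_{c+1}(F) ∩ R⟩ → (K ∩ γ_{c+1}(F))/⟨T_{c+1}(F) ∩ K⟩`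
induced by the inclusion. -/
def mapRKT (c : ℕ) (R K : Subgroup F) [R.Normal] [K.Normal] (hRK : R ≤ K) :
    (↥(R ⊓ (⊤ : Subgroup F).lowerCentralSeries c) ⧸ (Tcl c R).subgroupOf (R ⊓ (⊤ : Subgroup F).lowerCentralSeries c)) →*
      (↥(K ⊓ (⊤ : Subgroup F).lowerCentralSeries c) ⧸ (Tcl c K).subgroupOf (K ⊓ (⊤ : Subgroup F).lowerCentralSeries c)) :=
  QuotientGroup.map _ _ (Subgroup.inclusion (inf_le_inf_right _ hRK))
    (subgroupOf_le_comap_inclusion _ (Tcl_mono c hRK))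

/-- The map `(K ∩ γ_{c+1}(F))/⟨T_{c+1}(F) ∩ K⟩ → K/(⟨T_{c+1}(F) ∩ K⟩·R)` induced by the
inclusion, where the product `⟨T_{c+1}(F) ∩ K⟩·R` of normal subgroups is the join
`Tcl c K ⊔ R`. -/
def mapKKT (c : ℕ) (R K : Subgroup F) [R.Normal] [K.Normal] :
    (↥(K ⊓ (⊤ : Subgroup F).lowerCentralSeries c) ⧸ (Tcl c K).subgroupOf (K ⊓ (⊤ : Subgroup F).lowerCentralSeries c)) →*
      (↥K ⧸ (Tcl c K ⊔ R).subgroupOf K) :=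
  QuotientGroup.map _ _ (Subgroup.inclusion inf_le_left)
    (subgroupOf_le_comap_inclusion _ le_sup_left)

/-- The map `K/(⟨T_{c+1}(F) ∩ K⟩·R) → F/(R·γ_{c+1}(F))` induced by the inclusion `K ≤ F`,
where `R·γ_{c+1}(F) = R ⊔ lowerCentralSeries F c`. -/
def mapKFT (c : ℕ) (R K : Subgroup F) [R.Normal] [K.Normal] :
    (↥K ⧸ (Tcl c K ⊔ R).subgroupOf K) →* F ⧸ (R ⊔ (⊤ : Subgroup F).lowerCentralSeries c) :=
  QuotientGroup.map _ _ K.subtype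
    (Subgroup.comap_mono (sup_le ((Tcl_le_lcs c K).trans le_sup_right) le_sup_left))

/-- The map `F/(R·γ_{c+1}(F)) → F/(K·γ_{c+1}(F))` induced by the identity of `F`. -/
def mapFFT (c : ℕ) (R K : Subgroup F) [R.Normal] [K.Normal] (hRK : R ≤ K) :
    (F ⧸ (R ⊔ (⊤ : Subgroup F).lowerCentralSeries c)) →* F ⧸ (K ⊔ (⊤ : Subgroup F).lowerCentralSeries c) :=
  QuotientGroup.map _ _ (MonoidHom.id F)
    (by rw [Subgroup.comap_id]; exact sup_le_sup_right hRK _)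

theorem mapKFT_mk (c : ℕ) (R K : Subgroup F) [R.Normal] [K.Normal] (k : K) :
    mapKFT c R K (k : ↥K ⧸ (Tcl c K ⊔ R).subgroupOf K) =
      ((k : F) : F ⧸ (R ⊔ (⊤ : Subgroup F).lowerCentralSeries c)) := rfl

open Pointwise in
theorem mem_sup_of_normal' {G : Type*} [Group G] {N M : Subgroup G} [M.Normal] {x : G}
    (h : x ∈ N ⊔ M) : ∃ n ∈ N, ∃ m ∈ M, x = n * m := by
  have h' : x ∈ (N : Set G) * (M : Set G) := by rw [← Subgroup.mul_normal]; exact h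
  obtain ⟨n, hn, m, hm, hx⟩ := h'
  exact ⟨n, hn, m, hm, hx.symm⟩

/-- for `c ≥ 1` and normal subgroups `R ≤ K` of `F`, the sequence
`(R ∩ γ_{c+1}(F))/⟨T_{c+1}(F) ∩ R⟩ → (K ∩ γ_{c+1}(F))/⟨T_{c+1}(F) ∩ K⟩
→ K/(⟨T_{c+1}(F) ∩ K⟩·R) → F/(R·γ_{c+1}(F)) → F/(K·γ_{c+1}(F)) → 1`
of homomorphisms induced by the inclusions is exact. -/
theorem stmt16 (c : ℕ) (hc : 1 ≤ c) (R K : Subgroup F) [R.Normal] [K.Normal] (hRK : R ≤ K) :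
    (mapRKT c R K hRK).range = (mapKKT c R K).ker ∧
      (mapKKT c R K).range = (mapKFT c R K).ker ∧
      (mapKFT c R K).range = (mapFFT c R K hRK).ker ∧
      Function.Surjective (mapFFT c R K hRK) := by
  have hTK := Tcl_le_lcs c K
  refine ⟨?_, ?_, ?_, ?_⟩
  · ext q
    induction q using QuotientGroup.induction_on with
    | _ y =>
      simp only [MonoidHom.mem_range, MonoidHom.mem_ker]
      constructor
      · rintro ⟨p, hp⟩
        induction p using QuotientGroup.induction_on with
        | _ x =>
          rw [← hp]
          simp only [mapRKT, mapKKT, QuotientGroup.map_mk, QuotientGroup.eq_one_iff,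
            Subgroup.mem_subgroupOf]
          exact Subgroup.mem_sup_right (by simpa using x.2.1)
      · intro h1
        simp only [mapKKT, QuotientGroup.map_mk, QuotientGroup.eq_one_iff,
          Subgroup.mem_subgroupOf] at h1
        have h1' : (y : F) ∈ Tcl c K ⊔ R := by simpa using h1
        obtain ⟨t, ht, r, hr, hyx⟩ := mem_sup_of_normal' h1'
        have htγ : t ∈ (⊤ : Subgroup F).lowerCentralSeries c := hTK ht
        have hrγ : r ∈ (⊤ : Subgroup F).lowerCentralSeries c := by
          have h2 : r = t⁻¹ * (y : F) := by rw [hyx]; group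
          rw [h2]; exact mul_mem (inv_mem htγ) y.2.2
        refine ⟨QuotientGroup.mk ⟨r, hr, hrγ⟩, ?_⟩
        simp only [mapRKT, QuotientGroup.map_mk]
        rw [QuotientGroup.eq]
        have hmem : r⁻¹ * (y : F) ∈ Tcl c K := by
          have h2 : r⁻¹ * (y : F) = r⁻¹ * t * r⁻¹⁻¹ := by rw [hyx]; group
          rw [h2]; exact (Tcl_normal c K).conj_mem t ht r⁻¹
        simpa [Subgroup.mem_subgroupOf] using hmem
  · ext q
    induction q using QuotientGroup.induction_on with
    | _ y =>
      simp only [MonoidHom.mem_range, MonoidHom.mem_ker]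
      constructor
      · rintro ⟨p, hp⟩
        induction p using QuotientGroup.induction_on with
        | _ x =>
          rw [← hp]
          simp only [mapKKT, mapKFT_mk, QuotientGroup.map_mk, QuotientGroup.eq_one_iff]
          exact Subgroup.mem_sup_right (by simpa using x.2.2)
      · intro h1
        simp only [mapKFT_mk, QuotientGroup.eq_one_iff] at h1
        have h1' : (y : F) ∈ R ⊔ (⊤ : Subgroup F).lowerCentralSeries c := by simpa using h1
        obtain ⟨r, hr, g, hg, hyx⟩ := mem_sup_of_normal' h1'
        have hgK : g ∈ K := by
          have h2 : g = r⁻¹ * (y : F) := by rw [hyx]; group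
          rw [h2]; exact mul_mem (inv_mem (hRK hr)) y.2
        refine ⟨QuotientGroup.mk ⟨g, hgK, hg⟩, ?_⟩
        simp only [mapKKT, QuotientGroup.map_mk]
        rw [QuotientGroup.eq]
        have hmem : g⁻¹ * (y : F) ∈ Tcl c K ⊔ R := by
          have h2 : g⁻¹ * (y : F) = g⁻¹ * r * g⁻¹⁻¹ := by rw [hyx]; group
          rw [h2]; exact Subgroup.mem_sup_right (‹R.Normal›.conj_mem r hr g⁻¹)
        simpa [Subgroup.mem_subgroupOf] using hmem
  · ext q
    induction q using QuotientGroup.induction_on with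
    | _ x =>
      simp only [MonoidHom.mem_range, MonoidHom.mem_ker]
      constructor
      · rintro ⟨p, hp⟩
        induction p using QuotientGroup.induction_on with
        | _ k =>
          rw [← hp]
          simp only [mapKFT_mk, mapFFT, QuotientGroup.map_mk, QuotientGroup.eq_one_iff]
          exact Subgroup.mem_sup_left (by simpa using k.2)
      · intro h1
        simp only [mapFFT, QuotientGroup.map_mk, QuotientGroup.eq_one_iff] at h1
        have h1' : x ∈ K ⊔ (⊤ : Subgroup F).lowerCentralSeries c := by simpa using h1
        obtain ⟨k, hk, g, hg, hx⟩ := mem_sup_of_normal' h1'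
        refine ⟨QuotientGroup.mk ⟨k, hk⟩, ?_⟩
        simp only [mapKFT_mk]
        rw [QuotientGroup.eq]
        have hmem : k⁻¹ * x ∈ R ⊔ (⊤ : Subgroup F).lowerCentralSeries c := by
          have h2 : k⁻¹ * x = g := by rw [hx]; group
          rw [h2]; exact Subgroup.mem_sup_right hg
        simpa using hmem
  · intro q
    induction q using QuotientGroup.induction_on with
    | _ x =>
      exact ⟨QuotientGroup.mk x, by simp only [mapFFT, QuotientGroup.map_mk]; rfl⟩
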